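/- Every formal polynomial P of degree n over the max-plus semifield R_max = (R ∪ {-∞}, max, +) has exactly n corners c_1 ≥ ... ≥ c_n (points where the maximum in the polynomial function is attained at least twice, counted with multiplicity, with -∞ counted to multiplicity equal to the lower degree), and the associated polynomial function factors uniquely as P̂(y) = P_n ⊙ (y ⊕ c_1) ⊙ ... ⊙ (y ⊕ c_n), i.e. P̂(y) = P_n + Σ_{i=1}^n max(y, c_i) for all y. -/

import Mathlib

set_option linter.unusedVariables false

noncomputable section

/-- The max-plus (tropical) semifield `R_max = ℝ ∪ {-∞}`, with addition `max`
and multiplication `+`. -/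
abbrev RMax := WithBot ℝ

/-- The polynomial function `P̂(y) = max_{k ≤ n} (P_k + k·y)` of a formal
polynomial over `R_max` of degree at most `n`. -/
def tPhat (P : ℕ → RMax) (n : ℕ) (y : RMax) : RMax :=
  (Finset.range (n + 1)).sup fun k => P k + k • y

lemma msup_mem (s : Multiset RMax) (hs : s ≠ 0) : s.sup ∈ s := by
  induction s using Multiset.induction with
  | empty => simp at hs
  | cons x t ih =>
    rw [Multiset.sup_cons]
    rcases eq_or_ne t 0 with rfl | ht
    · simp
    · rcases max_cases x t.sup with ⟨h1, _⟩ | ⟨h1, _⟩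
      · rw [h1]; simp
      · rw [h1]; exact Multiset.mem_cons_of_mem (ih ht)

lemma card_smul_coe (m : ℕ) (y : ℝ) :
    (((m+1) • y : ℝ) : RMax) = (y : RMax) + ((m • y : ℝ) : RMax) := by
  rw [← WithBot.coe_add]; congr 1; simp [nsmul_eq_mul]; ring

lemma sum_max_ge (s : Multiset RMax) (y : ℝ) :
    ((s.card • y : ℝ) : RMax) ≤ (s.map (fun x => max ↑y x)).sum := by
  induction s using Multiset.induction with
  | empty => simp
  | cons x t ih =>
    simp only [Multiset.map_cons, Multiset.sum_cons, Multiset.card_cons]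
    rw [card_smul_coe]
    exact add_le_add (le_max_left _ _) ih

lemma sum_max_gt (s : Multiset RMax) (y : ℝ) (x : RMax) (hx : x ∈ s) (hxy : (y:RMax) < x) :
    ((s.card • y : ℝ) : RMax) < (s.map (fun x => max ↑y x)).sum := by
  induction s using Multiset.induction with
  | empty => simp at hx
  | cons a t ih =>
    simp only [Multiset.map_cons, Multiset.sum_cons, Multiset.card_cons]
    rw [card_smul_coe]
    rcases Multiset.mem_cons.mp hx with rfl | hxt
    · have h1 : (y : RMax) < max ↑y x := lt_max_of_lt_right hxy
      calc (y : RMax) + ((t.card • y : ℝ) : RMax)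
          < max ↑y x + ((t.card • y : ℝ) : RMax) :=
            WithBot.add_lt_add_right WithBot.coe_ne_bot h1
        _ ≤ max ↑y x + (t.map (fun x => max ↑y x)).sum :=
            add_le_add le_rfl (sum_max_ge t y)
    · calc (y : RMax) + ((t.card • y : ℝ) : RMax)
          < (y : RMax) + (t.map (fun x => max ↑y x)).sum :=
            WithBot.add_lt_add_left WithBot.coe_ne_bot (ih hxt)
        _ ≤ max ↑y a + (t.map (fun x => max ↑y x)).sum :=
            add_le_add (le_max_left _ _) le_rfl

lemma sum_eq_iff (s : Multiset RMax) (y : ℝ) :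
    (s.map (fun x => max ↑y x)).sum = ((s.card • y : ℝ) : RMax) ↔ s.sup ≤ ↑y := by
  constructor
  · intro h
    by_contra hs
    obtain ⟨x, hxs, hxy⟩ : ∃ x ∈ s, (y:RMax) < x := by
      by_contra hno
      push_neg at hno
      exact hs (Multiset.sup_le.mpr fun x hx => hno x hx)
    exact absurd h (ne_of_gt (sum_max_gt s y x hxs hxy))
  · intro h
    have : s.map (fun x => max ↑y x) = Multiset.replicate s.card (↑y : RMax) := by
      rw [Multiset.eq_replicate]
      constructor
      · simp
      · intro b hb
        obtain ⟨x, hx, rfl⟩ := Multiset.mem_map.mp hb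
        exact max_eq_left (Multiset.le_sup hx |>.trans h)
    rw [this, Multiset.sum_replicate, WithBot.coe_nsmul]

lemma lt_aux (a b : RMax) (h : a < b) : ∃ y : ℝ, a ≤ ↑y ∧ (↑y : RMax) < b := by
  lift b to ℝ using (ne_bot_of_gt h) with b'
  rcases eq_or_ne a ⊥ with rfl | ha
  · exact ⟨b' - 1, bot_le, by exact_mod_cast sub_one_lt b'⟩
  · lift a to ℝ using ha with a'
    exact ⟨a', le_rfl, h⟩

lemma eq_of_forall_le_coe (a b : RMax) (h : ∀ y : ℝ, a ≤ ↑y ↔ b ≤ ↑y) : a = b := by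
  by_contra hne
  rcases lt_or_gt_of_ne hne with hlt | hlt
  · obtain ⟨y, hy1, hy2⟩ := lt_aux a b hlt
    exact absurd ((h y).mp hy1) (not_le.mpr hy2)
  · obtain ⟨y, hy1, hy2⟩ := lt_aux b a hlt
    exact absurd ((h y).mpr hy1) (not_le.mpr hy2)

lemma uniq_aux (n : ℕ) : ∀ c d : Multiset RMax, Multiset.card c = n → Multiset.card d = n →
    (∀ y : ℝ, (c.map (fun x => max ↑y x)).sum = (d.map (fun x => max ↑y x)).sum) → c = d := by
  induction n with
  | zero =>
    intro c d hc hd _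
    rw [Multiset.card_eq_zero] at hc hd; rw [hc, hd]
  | succ n ih =>
    intro c d hc hd h
    have hcne : c ≠ 0 := by intro h0; rw [h0] at hc; simp at hc
    have hdne : d ≠ 0 := by intro h0; rw [h0] at hd; simp at hd
    have hsup : c.sup = d.sup := by
      apply eq_of_forall_le_coe
      intro y
      rw [← sum_eq_iff, ← sum_eq_iff, h y, hc, hd]
    have hMc : c.sup ∈ c := msup_mem c hcne
    have hMd : c.sup ∈ d := hsup ▸ msup_mem d hdne
    have hM : c.sup ≠ ⊥ ∨ True := Or.inr trivial
    have hkey : ∀ y : ℝ, ((c.erase c.sup).map (fun x => max ↑y x)).sum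
        = ((d.erase c.sup).map (fun x => max ↑y x)).sum := by
      intro y
      have h1 := h y
      rw [← Multiset.cons_erase hMc, ← Multiset.cons_erase hMd] at h1
      simp only [Multiset.map_cons, Multiset.sum_cons] at h1
      exact WithBot.add_left_cancel (fun hb => by
        have : (↑y : RMax) ≤ ⊥ := hb ▸ le_max_left _ _
        simp at this) h1
    have he : c.erase c.sup = d.erase c.sup := by
      apply ih
      · rw [Multiset.card_erase_of_mem hMc, hc]; rfl
      · rw [Multiset.card_erase_of_mem hMd, hd]; rfl
      · exact hkey
    rw [← Multiset.cons_erase hMc, ← Multiset.cons_erase hMd, he]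

lemma smul_coe (k : ℕ) (y : ℝ) : k • ((y : ℝ) : RMax) = ((k * y : ℝ) : RMax) := by
  rw [← WithBot.coe_nsmul, nsmul_eq_mul]

lemma L1 (a b c1 : ℝ) (i j : ℕ) (hij : i ≤ j) (y : RMax) (hy : y ≤ ↑c1)
    (hb : b = a + ((j:ℝ) - i) * c1) : (↑a : RMax) + j • y ≤ ↑b + i • y := by
  have h0 : j • y = (j - i) • y + i • y := by rw [← add_nsmul, Nat.sub_add_cancel hij]
  rw [h0, ← add_assoc]
  refine add_le_add ?_ le_rfl
  have h2 : (j - i) • y ≤ (↑((j - i) • c1) : RMax) := by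
    rw [WithBot.coe_nsmul]
    exact nsmul_le_nsmul_right hy _
  calc (↑a : RMax) + (j - i) • y ≤ ↑a + ↑((j - i) • c1) := add_le_add le_rfl h2
    _ = ↑b := by
        rw [← WithBot.coe_add]
        congr 1
        rw [hb, nsmul_eq_mul, Nat.cast_sub hij]

/-- quotient coefficients after peeling off corner `c1` attained at `k₀`. -/
def QQ (P : ℕ → RMax) (n : ℕ) (p c1 : ℝ) (k₀ : ℕ) : ℕ → RMax := fun k =>
  if k < k₀ then P k + ↑(-c1) else if k ≤ n then ↑(p + ((n:ℝ) - k) * c1) else ⊥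

lemma nsmul_succ_split (k : ℕ) (y : RMax) : (k+1) • y = y + k • y := by
  rw [add_nsmul, one_nsmul, add_comm]

lemma step (n : ℕ) (P : ℕ → RMax) (p c1 : ℝ) (k₀ : ℕ)
    (hp : P (n+1) = ↑p) (hk₀ : k₀ ≤ n)
    (hub : ∀ k, k ≤ n + 1 → P k ≤ ↑(p + ((n:ℝ) + 1 - k) * c1))
    (hat : P k₀ = ↑(p + ((n:ℝ) + 1 - k₀) * c1)) :
    ∀ y : RMax, tPhat P (n+1) y = max y ↑c1 + tPhat (QQ P n p c1 k₀) n y := by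
  intro y
  set Q := QQ P n p c1 k₀ with hQ
  set T := tPhat Q n y with hT
  have hterm : ∀ k, k ≤ n → Q k + k • y ≤ T := by
    intro k hk
    exact Finset.le_sup (f := fun k => Q k + k • y) (Finset.mem_range.mpr (by omega))
  have hPterm : ∀ k, k ≤ n + 1 → P k + k • y ≤ tPhat P (n+1) y := by
    intro k hk
    exact Finset.le_sup (f := fun k => P k + k • y) (Finset.mem_range.mpr (by omega))
  -- computing Q on the two regions
  have hQlt : ∀ k, k < k₀ → Q k = P k + ↑(-c1) := fun k hk => by
    simp only [hQ, QQ, if_pos hk]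
  have hQge : ∀ k, k₀ ≤ k → k ≤ n → Q k = ↑(p + ((n:ℝ) - k) * c1) := fun k h1 h2 => by
    simp only [hQ, QQ, if_neg (not_lt.mpr h1), if_pos h2]
  -- the "multiply by c1" identity on the lower region
  have hlow : ∀ k, k < k₀ → (↑c1 : RMax) + (Q k + k • y) = P k + k • y := by
    intro k hk
    rw [hQlt k hk]
    rcases eq_or_ne (P k) ⊥ with hb | hb
    · rw [hb]; simp
    · obtain ⟨pk, hpk⟩ := WithBot.ne_bot_iff_exists.mp hb
      rw [← hpk, ← add_assoc, ← WithBot.coe_add, ← WithBot.coe_add]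
      congr 2
      ring
  -- the "multiply by c1" identity on the upper region
  have hhigh : ∀ k, k₀ ≤ k → k ≤ n →
      (↑c1 : RMax) + (Q k + k • y) = (↑(p + ((n:ℝ) + 1 - k) * c1) : RMax) + k • y := by
    intro k h1 h2
    rw [hQge k h1 h2, ← add_assoc, ← WithBot.coe_add]
    congr 2
    ring
  apply le_antisymm
  · -- tPhat P ≤ max y c1 + T
    apply Finset.sup_le
    intro j hj
    rw [Finset.mem_range] at hj
    have hj' : j ≤ n + 1 := by omega
    rcases lt_trichotomy j k₀ with hlt | heq | hgt
    · calc P j + j • y = ↑c1 + (Q j + j • y) := (hlow j hlt).symm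
        _ ≤ max y ↑c1 + T := add_le_add (le_max_right _ _) (hterm j (by omega))
    · subst heq
      calc P j + j • y = ↑c1 + (Q j + j • y) := by
            rw [hhigh j le_rfl hk₀, ← hat]
        _ ≤ max y ↑c1 + T := add_le_add (le_max_right _ _) (hterm j hk₀)
    · -- k₀ < j : use term j - 1 of Q
      have h1 : 1 ≤ j := by omega
      have hjn : j - 1 ≤ n := by omega
      have hQj : Q (j-1) = ↑(p + ((n:ℝ) + 1 - j) * c1) := by
        rw [hQge (j-1) (by omega) hjn]
        congr 2
        rw [Nat.cast_sub h1]
        push_cast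
        ring
      calc P j + j • y ≤ ↑(p + ((n:ℝ) + 1 - j) * c1) + j • y :=
            add_le_add (hub j hj') le_rfl
        _ = y + (Q (j-1) + (j-1) • y) := by
            rw [hQj, show j = (j-1) + 1 by omega, nsmul_succ_split, add_left_comm]
            congr 2 <;> omega
        _ ≤ max y ↑c1 + T := add_le_add (le_max_left _ _) (hterm (j-1) hjn)
  · -- max y c1 + T ≤ tPhat P
    obtain ⟨k, hk, hks⟩ := Finset.exists_mem_eq_sup (Finset.range (n+1))
      (Finset.nonempty_range_iff.mpr (Nat.succ_ne_zero n)) (fun k => Q k + k • y)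
    rw [Finset.mem_range] at hk
    have hkn : k ≤ n := by omega
    rw [hT, tPhat, hks, (max_add_add_right y (↑c1) _).symm]
    apply max_le
    · -- y + (Q k + k y) ≤ P̂
      rw [add_left_comm, ← nsmul_succ_split]
      rcases lt_or_ge k k₀ with hlt | hge
      · rw [hQlt k hlt]
        rcases eq_or_ne (P k) ⊥ with hb | hb
        · rw [hb]; simpa using bot_le
        · obtain ⟨pk, hpk⟩ := WithBot.ne_bot_iff_exists.mp hb
          rcases le_total y ↑c1 with hy | hy
          · calc P k + ↑(-c1) + (k+1) • y
                = ↑(pk + -c1) + (k+1) • y := by rw [← hpk, ← WithBot.coe_add]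
              _ ≤ ↑pk + k • y := L1 _ _ c1 k (k+1) (by omega) y hy (by push_cast; ring)
              _ = P k + k • y := by rw [hpk]
              _ ≤ tPhat P (n+1) y := hPterm k (by omega)
          · obtain ⟨y', rfl, hy'⟩ := WithBot.coe_le_iff.mp hy
            have hpk' : pk ≤ p + ((n:ℝ) + 1 - k) * c1 := by
              have := hub k (by omega)
              rw [← hpk] at this
              exact_mod_cast this
            calc P k + ↑(-c1) + (k+1) • (↑y' : RMax)
                = ↑(pk + -c1 + (k+1) * y') := by
                  rw [← hpk, ← WithBot.coe_add, smul_coe, ← WithBot.coe_add]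
                  push_cast; ring_nf
              _ ≤ ↑(p + (n+1) * y') := by
                  apply WithBot.coe_le_coe.mpr
                  have hmul : ((n:ℝ) - k) * c1 ≤ ((n:ℝ) - k) * y' :=
                    mul_le_mul_of_nonneg_left hy' (by
                      have : (k:ℝ) ≤ (n:ℝ) := by exact_mod_cast hkn
                      linarith)
                  push_cast
                  nlinarith [hmul, hpk']
              _ = P (n+1) + (n+1) • (↑y' : RMax) := by
                  rw [hp, smul_coe, ← WithBot.coe_add]
                  push_cast; ring_nf
              _ ≤ tPhat P (n+1) (↑y') := hPterm (n+1) le_rfl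
      · rw [hQge k hge hkn]
        rcases le_total y ↑c1 with hy | hy
        · calc (↑(p + ((n:ℝ) - k) * c1) : RMax) + (k+1) • y
              ≤ ↑(p + ((n:ℝ) + 1 - k₀) * c1) + k₀ • y := by
                apply L1 _ _ c1 k₀ (k+1) (by omega) y hy
                push_cast; ring
            _ = P k₀ + k₀ • y := by rw [hat]
            _ ≤ tPhat P (n+1) y := hPterm k₀ (by omega)
        · obtain ⟨y', rfl, hy'⟩ := WithBot.coe_le_iff.mp hy
          calc (↑(p + ((n:ℝ) - k) * c1) : RMax) + (k+1) • (↑y' : RMax)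
              = ↑(p + ((n:ℝ) - k) * c1 + (k+1) * y') := by
                rw [smul_coe, ← WithBot.coe_add]; push_cast; ring_nf
            _ ≤ ↑(p + (n+1) * y') := by
                apply WithBot.coe_le_coe.mpr
                have hmul : ((n:ℝ) - k) * c1 ≤ ((n:ℝ) - k) * y' :=
                  mul_le_mul_of_nonneg_left hy' (by
                    have : (k:ℝ) ≤ (n:ℝ) := by exact_mod_cast hkn
                    linarith)
                push_cast
                nlinarith [hmul]
            _ = P (n+1) + (n+1) • (↑y' : RMax) := by
                rw [hp, smul_coe, ← WithBot.coe_add]; push_cast; ring_nf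
            _ ≤ tPhat P (n+1) (↑y') := hPterm (n+1) le_rfl
    · -- c1 + (Q k + k y) ≤ P̂
      rcases lt_or_ge k k₀ with hlt | hge
      · rw [hlow k hlt]
        exact hPterm k (by omega)
      · rw [hhigh k hge hkn]
        rcases le_total y ↑c1 with hy | hy
        · calc (↑(p + ((n:ℝ) + 1 - k) * c1) : RMax) + k • y
              ≤ ↑(p + ((n:ℝ) + 1 - k₀) * c1) + k₀ • y := by
                apply L1 _ _ c1 k₀ k hge y hy
                push_cast; ring
            _ = P k₀ + k₀ • y := by rw [hat]
            _ ≤ tPhat P (n+1) y := hPterm k₀ (by omega)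
        · obtain ⟨y', rfl, hy'⟩ := WithBot.coe_le_iff.mp hy
          calc (↑(p + ((n:ℝ) + 1 - k) * c1) : RMax) + k • (↑y' : RMax)
              = ↑(p + ((n:ℝ) + 1 - k) * c1 + k * y') := by
                rw [smul_coe, ← WithBot.coe_add]
            _ ≤ ↑(p + (n+1) * y') := by
                apply WithBot.coe_le_coe.mpr
                have hmul : ((n:ℝ) + 1 - k) * c1 ≤ ((n:ℝ) + 1 - k) * y' :=
                  mul_le_mul_of_nonneg_left hy' (by
                    have : (k:ℝ) ≤ (n:ℝ) := by exact_mod_cast hkn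
                    linarith)
                push_cast
                nlinarith [hmul]
            _ = P (n+1) + (n+1) • (↑y' : RMax) := by
                rw [hp, smul_coe, ← WithBot.coe_add]; push_cast; ring_nf
            _ ≤ tPhat P (n+1) (↑y') := hPterm (n+1) le_rfl

lemma exists_part (n : ℕ) : ∀ (P : ℕ → RMax), P n ≠ ⊥ →
    ∃ c : Multiset RMax, Multiset.card c = n ∧
      ∀ y : RMax, tPhat P n y = P n + (c.map fun ci => max y ci).sum := by
  induction n with
  | zero =>
    intro P _
    exact ⟨0, rfl, fun y => by simp [tPhat, Finset.range_one]⟩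
  | succ n ih =>
    intro P hP
    obtain ⟨p, hp⟩ := WithBot.ne_bot_iff_exists.mp hP
    by_cases hall : ∀ k, k ≤ n → P k = ⊥
    · refine ⟨Multiset.replicate (n+1) ⊥, by simp, fun y => ?_⟩
      have hsup : tPhat P (n+1) y = P (n+1) + (n+1) • y := by
        apply le_antisymm
        · apply Finset.sup_le
          intro k hk
          rw [Finset.mem_range] at hk
          rcases eq_or_ne k (n+1) with rfl | hne
          · exact le_rfl
          · rw [hall k (by omega)]
            simp
        · exact Finset.le_sup (f := fun k => P k + k • y)
            (Finset.mem_range.mpr (by omega))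
      rw [hsup]
      congr 1
      rw [Multiset.map_replicate, Multiset.sum_replicate, max_eq_left bot_le]
    · push_neg at hall
      obtain ⟨k₁, hk₁n, hk₁⟩ := hall
      set S := (Finset.range (n+1)).filter (fun k => P k ≠ ⊥) with hS
      have hSne : S.Nonempty :=
        ⟨k₁, Finset.mem_filter.mpr ⟨Finset.mem_range.mpr (by omega), hk₁⟩⟩
      set slope : ℕ → ℝ := fun k => ((WithBot.unbotD 0 (P k)) - p) / ((n:ℝ) + 1 - k) with hslope
      set c1 := S.sup' hSne slope with hc1
      obtain ⟨k₀, hk₀S, hk₀⟩ := Finset.exists_mem_eq_sup' hSne slope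
      have hk₀mem := Finset.mem_filter.mp hk₀S
      have hk₀n : k₀ ≤ n := by
        have := Finset.mem_range.mp hk₀mem.1; omega
      have hval : ∀ k, P k ≠ ⊥ → P k = ↑(WithBot.unbotD 0 (P k)) := by
        intro k h
        cases hPk : P k with
        | none => exact absurd hPk h
        | some x => rfl
      have hden : ∀ k, k ≤ n → (0:ℝ) < (n:ℝ) + 1 - k := by
        intro k hk
        have : (k:ℝ) ≤ (n:ℝ) := by exact_mod_cast hk
        linarith
      have hub : ∀ k, k ≤ n + 1 → P k ≤ ↑(p + ((n:ℝ) + 1 - k) * c1) := by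
        intro k hk
        rcases eq_or_ne k (n+1) with rfl | hne
        · rw [← hp]
          apply WithBot.coe_le_coe.mpr
          push_cast
          nlinarith []
        · have hkn : k ≤ n := by omega
          rcases eq_or_ne (P k) ⊥ with hb | hb
          · rw [hb]; exact bot_le
          · have hkS : k ∈ S := Finset.mem_filter.mpr ⟨Finset.mem_range.mpr (by omega), hb⟩
            have hsl : slope k ≤ c1 := Finset.le_sup' slope hkS
            rw [hval k hb]
            apply WithBot.coe_le_coe.mpr
            have h2 : (WithBot.unbotD 0 (P k)) - p ≤ c1 * ((n:ℝ) + 1 - k) := by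
              rw [hslope] at hsl
              exact (div_le_iff₀ (hden k hkn)).mp hsl
            nlinarith [h2]
      have hat : P k₀ = ↑(p + ((n:ℝ) + 1 - k₀) * c1) := by
        rw [hval k₀ hk₀mem.2]
        congr 1
        rw [show c1 = slope k₀ from hk₀, hslope]
        field_simp [(hden k₀ hk₀n).ne']
        ring
      have hstep := step n P p c1 k₀ hp.symm hk₀n hub hat
      have hQn : QQ P n p c1 k₀ n = ↑(p + ((n:ℝ) - n) * c1) := by
        simp only [QQ, if_neg (not_lt.mpr hk₀n), if_pos (le_refl n)]
      obtain ⟨c', hc'card, hc'⟩ := ih (QQ P n p c1 k₀) (by rw [hQn]; exact WithBot.coe_ne_bot)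
      refine ⟨↑c1 ::ₘ c', by simp [hc'card], fun y => ?_⟩
      rw [hstep y, hc' y, hQn, Multiset.map_cons, Multiset.sum_cons]
      rw [show (↑(p + ((n:ℝ) - n) * c1) : RMax) = ↑p by norm_num, ← hp]
      rw [add_left_comm]

/-- Fundamental theorem of tropical algebra (Cuninghame-Green–Meijer): every
formal polynomial of degree `n` over `R_max` has exactly `n` corners
`c₁ ≥ ⋯ ≥ c_n` (counted with multiplicity) and its polynomial function factors
uniquely as `P̂(y) = P_n ⊙ (y ⊕ c₁) ⊙ ⋯ ⊙ (y ⊕ c_n)`, i.e.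
`P̂(y) = P_n + Σᵢ max(y, cᵢ)`: the multiset of the `cᵢ` exists and is unique. -/
theorem rmax_fundamental_theorem (P : ℕ → RMax) (n : ℕ)
    (hPn : P n ≠ ⊥) (hdeg : ∀ k, n < k → P k = ⊥) :
    ∃! c : Multiset RMax, Multiset.card c = n ∧
      ∀ y : RMax, tPhat P n y = P n + (c.map fun ci => max y ci).sum := by
  obtain ⟨c, hcard, hc⟩ := exists_part n P hPn
  refine ⟨c, ⟨hcard, hc⟩, ?_⟩
  rintro d ⟨hdcard, hd⟩
  apply uniq_aux n d c hdcard hcard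
  intro y
  exact WithBot.add_left_cancel hPn ((hd ↑y).symm.trans (hc ↑y))
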